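/- arXiv:2410.10765 — 2 statements merged into one kernel-verified Lean document; each statement's English description precedes it below -/
import Mathlib

section
/- For all constants $m_0 > 0$, $E > 0$, $H_0 \in \mathbb{R}$, there exist $\ell > 0$, $R > 0$, $\mu > 0$, depending only on $m_0, E, H_0$, such that every measurable function $f : \mathbb{R}^3 \to [0,\infty)$ satisfying $\int f\,dv \ge m_0$, $\int f|v|^2\,dv \le E$, and $\int f \ln f\,dv \le H_0$ has the property that the Lebesgue measure of the set $\{v \in B_R : f(v) \ge \ell\}$ is at least $\mu$. -/
noncomputable section

open MeasureTheory Real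

abbrev E3 : Type := EuclideanSpace ℝ (Fin 3)

lemma gauss_integrable : Integrable (fun v : E3 => rexp (-(‖v‖^2))) := by
  have h := GaussianFourier.integrable_cexp_neg_mul_sq_norm_add
    (V := E3) (b := (1:ℂ)) (by norm_num) 0 (0 : E3)
  refine h.norm.congr (Filter.Eventually.of_forall fun v => ?_)
  simp [Complex.norm_exp]
  norm_cast

lemma entropy_ptwise (a b : ℝ) (ha : 0 ≤ a) (hb : 0 < b) :
    a * Real.log b + a - b ≤ a * Real.log a := by
  rcases eq_or_lt_of_le ha with h | h
  · simp [← h, hb.le]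
  · have h1 : Real.log (b / a) ≤ b / a - 1 := Real.log_le_sub_one_of_pos (by positivity)
    rw [Real.log_div hb.ne' h.ne'] at h1
    have h2 : a * (Real.log b - Real.log a) ≤ a * (b / a - 1) :=
      mul_le_mul_of_nonneg_left h1 ha
    have h3 : a * (b / a - 1) = b - a := by field_simp
    nlinarith [h2]

/-- For all `m₀, E > 0` and `H₀ ∈ ℝ` there exist `ℓ, R, μ > 0`, depending only on
`m₀, E, H₀`, such that any nonnegative `f` with mass at least `m₀`, energy at most `E`
and entropy at most `H₀` satisfies `|{v ∈ B_R : f(v) ≥ ℓ}| ≥ μ`. -/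
theorem mass_on_bounded_set (m0 En H0 : ℝ) (hm0 : 0 < m0) (hE : 0 < En) :
    ∃ ℓ R μ : ℝ, 0 < ℓ ∧ 0 < R ∧ 0 < μ ∧
      ∀ f : E3 → ℝ, Measurable f → (∀ v, 0 ≤ f v) →
        Integrable f → Integrable (fun v => f v * ‖v‖ ^ 2) →
        Integrable (fun v => f v * Real.log (f v)) →
        m0 ≤ (∫ v : E3, f v) →
        (∫ v : E3, f v * ‖v‖ ^ 2) ≤ En →
        (∫ v : E3, f v * Real.log (f v)) ≤ H0 →
        ENNReal.ofReal μ ≤ volume {v : E3 | ‖v‖ < R ∧ ℓ ≤ f v} := by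
  set R : ℝ := Real.sqrt (4 * En / m0) + 1 with hRdef
  have hRpos : 0 < R := by positivity
  have hR2 : 4 * En / m0 ≤ R ^ 2 := by
    have h1 : 0 ≤ 4 * En / m0 := by positivity
    have h2 : Real.sqrt (4 * En / m0) ^ 2 = 4 * En / m0 := Real.sq_sqrt h1
    nlinarith [Real.sqrt_nonneg (4 * En / m0)]
  set VB : ℝ := (volume (Metric.ball (0:E3) R)).toReal with hVBdef
  have hVB : 0 ≤ VB := ENNReal.toReal_nonneg
  set ℓ : ℝ := m0 / (4 * (VB + 1)) with hldef
  have hlpos : 0 < ℓ := by positivity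
  set C : ℝ := ∫ v : E3, rexp (-(‖v‖ ^ 2)) with hCdef
  have hC : 0 ≤ C := integral_nonneg fun v => (Real.exp_pos _).le
  set D : ℝ := |H0| + En + C with hDdef
  have hD : 0 < D := by positivity
  set K : ℝ := rexp (4 * D / m0 + 1) with hKdef
  have hKpos : 0 < K := Real.exp_pos _
  have hlogK : Real.log K = 4 * D / m0 + 1 := Real.log_exp _
  have hlogKpos : 0 < Real.log K := by rw [hlogK]; positivity
  refine ⟨ℓ, R, m0 / (4 * K), hlpos, hRpos, by positivity, ?_⟩
  intro f hfm hf0 hfi hfei hfli hmass henergy hent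
  set B : Set E3 := Metric.ball (0:E3) R with hBdef
  set L : Set E3 := {v : E3 | ℓ ≤ f v} with hLdef
  set T : Set E3 := {v : E3 | K ≤ f v} with hTdef
  have hBmeas : MeasurableSet B := measurableSet_ball
  have hLmeas : MeasurableSet L := measurableSet_le measurable_const hfm
  have hTmeas : MeasurableSet T := measurableSet_le measurable_const hfm
  have hGset : {v : E3 | ‖v‖ < R ∧ ℓ ≤ f v} = B ∩ L := by
    ext v; simp [hBdef, hLdef, mem_ball_zero_iff]
  -- Step 1: Chebyshev tail bound
  have hBc : ∀ v : E3, v ∈ Bᶜ → R ≤ ‖v‖ := by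
    intro v hv
    simpa [hBdef, mem_ball_zero_iff, not_lt] using hv
  have hcheb : ∫ v in Bᶜ, f v ≤ m0 / 4 := by
    have e1 : (∫ v in Bᶜ, f v) * R ^ 2 ≤ En := by
      calc (∫ v in Bᶜ, f v) * R ^ 2 = ∫ v in Bᶜ, f v * R ^ 2 :=
            (integral_mul_const _ _).symm
        _ ≤ ∫ v in Bᶜ, f v * ‖v‖ ^ 2 := by
            refine setIntegral_mono_on ((hfi.mul_const _).integrableOn)
              hfei.integrableOn hBmeas.compl fun v hv => ?_
            exact mul_le_mul_of_nonneg_left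
              (pow_le_pow_left₀ hRpos.le (hBc v hv) 2) (hf0 v)
        _ ≤ ∫ v, f v * ‖v‖ ^ 2 :=
            setIntegral_le_integral hfei (Filter.Eventually.of_forall fun v => mul_nonneg (hf0 v) (by positivity))
        _ ≤ En := henergy
    have hRsq : 0 < R ^ 2 := by positivity
    have hR2' : 4 * En ≤ m0 * R ^ 2 := by
      rwa [div_le_iff₀ hm0, mul_comm (R ^ 2)] at hR2
    nlinarith [e1]
  have hBge : 3 / 4 * m0 ≤ ∫ v in B, f v := by
    have hsplit := integral_add_compl hBmeas hfi (f := f)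
    linarith
  -- Step 2: entropy tail bound
  have hTc_lb : -(En + C) ≤ ∫ v in Tᶜ, f v * Real.log (f v) := by
    have hpt : ∀ v : E3, f v * (-(‖v‖ ^ 2)) + (f v - rexp (-(‖v‖ ^ 2)))
        ≤ f v * Real.log (f v) := by
      intro v
      have h := entropy_ptwise (f v) (rexp (-(‖v‖ ^ 2))) (hf0 v) (Real.exp_pos _)
      rw [Real.log_exp] at h
      linarith
    have h1 : Integrable (fun v : E3 => f v * (-(‖v‖ ^ 2))) :=
      hfei.neg.congr (Filter.Eventually.of_forall fun v => (mul_neg _ _).symm)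
    have h2 : Integrable (fun v : E3 => f v - rexp (-(‖v‖ ^ 2))) := hfi.sub gauss_integrable
    have hmono : ∫ v in Tᶜ, (f v * (-(‖v‖ ^ 2)) + (f v - rexp (-(‖v‖ ^ 2))))
        ≤ ∫ v in Tᶜ, f v * Real.log (f v) :=
      setIntegral_mono_on (h1.add h2).integrableOn hfli.integrableOn hTmeas.compl
        fun v _ => hpt v
    have hsplit : ∫ v in Tᶜ, (f v * (-(‖v‖ ^ 2)) + (f v - rexp (-(‖v‖ ^ 2))))
        = (∫ v in Tᶜ, f v * (-(‖v‖ ^ 2))) + ((∫ v in Tᶜ, f v) - ∫ v in Tᶜ, rexp (-(‖v‖ ^ 2))) := by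
      rw [integral_add h1.integrableOn h2.integrableOn,
        integral_sub hfi.integrableOn gauss_integrable.integrableOn]
    have hb1 : ∫ v in Tᶜ, f v * (-(‖v‖ ^ 2)) = -(∫ v in Tᶜ, f v * ‖v‖ ^ 2) := by
      simp_rw [mul_neg]
      exact integral_neg _
    have hb2 : ∫ v in Tᶜ, f v * ‖v‖ ^ 2 ≤ En :=
      le_trans (setIntegral_le_integral hfei
        (Filter.Eventually.of_forall fun v => mul_nonneg (hf0 v) (by positivity))) henergy
    have hb3 : (0:ℝ) ≤ ∫ v in Tᶜ, f v := setIntegral_nonneg hTmeas.compl fun v _ => hf0 v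
    have hb4 : ∫ v in Tᶜ, rexp (-(‖v‖ ^ 2)) ≤ C :=
      setIntegral_le_integral gauss_integrable
        (Filter.Eventually.of_forall fun v => (Real.exp_pos _).le)
    rw [hsplit, hb1] at hmono
    linarith
  have hTtail : ∫ v in T, f v ≤ m0 / 4 := by
    have hkey : Real.log K * (∫ v in T, f v) ≤ H0 + En + C := by
      calc Real.log K * (∫ v in T, f v) = ∫ v in T, Real.log K * f v :=
            (integral_const_mul _ _).symm
        _ ≤ ∫ v in T, f v * Real.log (f v) := by
            refine setIntegral_mono_on ((hfi.const_mul _).integrableOn)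
              hfli.integrableOn hTmeas fun v hv => ?_
            have hv' : K ≤ f v := hv
            have hlog : Real.log K ≤ Real.log (f v) :=
              Real.log_le_log hKpos hv'
            calc Real.log K * f v = f v * Real.log K := mul_comm _ _
              _ ≤ f v * Real.log (f v) := mul_le_mul_of_nonneg_left hlog (hf0 v)
        _ = (∫ v, f v * Real.log (f v)) - ∫ v in Tᶜ, f v * Real.log (f v) := by
            have := integral_add_compl hTmeas hfli
            linarith
        _ ≤ H0 + En + C := by linarith
    have hDle : H0 + En + C ≤ D := by
      have := le_abs_self H0; rw [hDdef]; linarith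
    have hKmul : Real.log K * (m0 / 4) = D + m0 / 4 := by
      rw [hlogK]; field_simp
    have : Real.log K * (∫ v in T, f v) ≤ Real.log K * (m0 / 4) := by
      rw [hKmul]; linarith
    exact le_of_mul_le_mul_left this hlogKpos
  -- Step 3: small-value bound on the ball
  have hBfin : volume B < ⊤ := measure_ball_lt_top
  have hsmall : ∫ v in B \ L, f v ≤ m0 / 4 := by
    have hfinBL : volume (B \ L) < ⊤ :=
      lt_of_le_of_lt (measure_mono Set.diff_subset) hBfin
    calc ∫ v in B \ L, f v ≤ ∫ _v in B \ L, ℓ := by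
          refine setIntegral_mono_on hfi.integrableOn
            (integrableOn_const hfinBL.ne enorm_ne_top) (hBmeas.diff hLmeas) fun v hv => ?_
          exact (lt_of_not_ge hv.2).le
      _ = (volume (B \ L)).toReal * ℓ := by rw [setIntegral_const, smul_eq_mul, measureReal_def]
      _ ≤ VB * ℓ := by
          refine mul_le_mul_of_nonneg_right ?_ hlpos.le
          exact ENNReal.toReal_mono hBfin.ne (measure_mono Set.diff_subset)
      _ ≤ m0 / 4 := by
          have hne : VB + 1 ≠ 0 := by positivity
          have h1 : (VB + 1) * ℓ = m0 / 4 := by rw [hldef]; field_simp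
          nlinarith [hlpos]
  -- Step 4: combine
  have hsplitB : (∫ v in B ∩ L, f v) + ∫ v in B \ L, f v = ∫ v in B, f v :=
    integral_inter_add_diff hLmeas hfi.integrableOn
  have hGL : m0 / 2 ≤ ∫ v in B ∩ L, f v := by linarith
  have hsplit2 : (∫ v in (B ∩ L) ∩ T, f v) + ∫ v in (B ∩ L) \ T, f v = ∫ v in B ∩ L, f v :=
    integral_inter_add_diff hTmeas hfi.integrableOn
  have hinT : ∫ v in (B ∩ L) ∩ T, f v ≤ ∫ v in T, f v :=
    setIntegral_mono_set hfi.integrableOn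
      (Filter.Eventually.of_forall fun v => hf0 v)
      (Set.inter_subset_right).eventuallyLE
  have hbig : m0 / 4 ≤ ∫ v in (B ∩ L) \ T, f v := by linarith
  have hGLfin : volume (B ∩ L) < ⊤ :=
    lt_of_le_of_lt (measure_mono Set.inter_subset_left) hBfin
  have hup : ∫ v in (B ∩ L) \ T, f v ≤ K * (volume (B ∩ L)).toReal := by
    have hfin2 : volume ((B ∩ L) \ T) < ⊤ :=
      lt_of_le_of_lt (measure_mono Set.diff_subset) hGLfin
    calc ∫ v in (B ∩ L) \ T, f v ≤ ∫ _v in (B ∩ L) \ T, K := by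
          refine setIntegral_mono_on hfi.integrableOn
            (integrableOn_const hfin2.ne enorm_ne_top) ((hBmeas.inter hLmeas).diff hTmeas)
            fun v hv => ?_
          exact (lt_of_not_ge hv.2).le
      _ = (volume ((B ∩ L) \ T)).toReal * K := by rw [setIntegral_const, smul_eq_mul, measureReal_def]
      _ ≤ (volume (B ∩ L)).toReal * K := by
          refine mul_le_mul_of_nonneg_right ?_ hKpos.le
          exact ENNReal.toReal_mono hGLfin.ne (measure_mono Set.diff_subset)
      _ = K * (volume (B ∩ L)).toReal := mul_comm _ _
  have hfinal : m0 / (4 * K) ≤ (volume (B ∩ L)).toReal := by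
    have h : m0 / 4 ≤ K * (volume (B ∩ L)).toReal := hbig.trans hup
    calc m0 / (4 * K) = m0 / 4 / K := (div_div _ _ _).symm
      _ ≤ (volume (B ∩ L)).toReal := by
          rw [div_le_iff₀ hKpos]
          linarith [h, mul_comm K (volume (B ∩ L)).toReal]
  rw [hGset]
  exact (ENNReal.ofReal_le_iff_le_toReal hGLfin.ne).2 hfinal
end
end

section
/- Let $C > 0$, $t_0 \in \mathbb{R}$, $T > t_0$, and let $Y : [t_0, T] \to (0,\infty)$ be differentiable with $Y'(\sigma) \le C\,(Y(\sigma) + Y(\sigma)^3)$ for all $\sigma \in [t_0,T]$. Then for every $\sigma \in [t_0,T]$ such that $e^{-2C(\sigma - t_0)}\big(Y(t_0)^{-2} + 1\big) > 1$, one has $Y(\sigma)^2 \le \Big[e^{-2C(\sigma - t_0)}\big(Y(t_0)^{-2} + 1\big) - 1\Big]^{-1}$. In particular, if $\sigma - t_0 \le (2C)^{-1}\ln\big(1 + \frac{1}{1 + 2 Y(t_0)^2}\big)$, then $Y(\sigma) \le \sqrt{2}\, Y(t_0)$. -/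
noncomputable section

open Real

/-- ODE comparison lemma: if `Y > 0` is differentiable on `[t₀,T]` and satisfies
`Y' ≤ C (Y + Y³)`, then as long as `e^{-2C(σ-t₀)}(Y(t₀)⁻² + 1) > 1` one has
`Y(σ)² ≤ (e^{-2C(σ-t₀)}(Y(t₀)⁻² + 1) - 1)⁻¹`; in particular, if
`σ - t₀ ≤ (2C)⁻¹ ln(1 + 1/(1 + 2 Y(t₀)²))` then `Y(σ) ≤ √2 Y(t₀)`. -/
theorem ode_comparison (C t0 T : ℝ) (hC : 0 < C) (hT : t0 < T) (Y : ℝ → ℝ)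
    (hpos : ∀ σ ∈ Set.Icc t0 T, 0 < Y σ)
    (hdiff : ∀ σ ∈ Set.Icc t0 T, DifferentiableAt ℝ Y σ)
    (hineq : ∀ σ ∈ Set.Icc t0 T, deriv Y σ ≤ C * (Y σ + Y σ ^ 3)) :
    (∀ σ ∈ Set.Icc t0 T,
        1 < Real.exp (-2 * C * (σ - t0)) * (1 / Y t0 ^ 2 + 1) →
        Y σ ^ 2 ≤ (Real.exp (-2 * C * (σ - t0)) * (1 / Y t0 ^ 2 + 1) - 1)⁻¹) ∧
    (∀ σ ∈ Set.Icc t0 T,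
        σ - t0 ≤ (2 * C)⁻¹ * Real.log (1 + 1 / (1 + 2 * Y t0 ^ 2)) →
        Y σ ≤ Real.sqrt 2 * Y t0) := by
  have ht0 : t0 ∈ Set.Icc t0 T := ⟨le_refl _, hT.le⟩
  have hY0 : 0 < Y t0 := hpos t0 ht0
  set g : ℝ → ℝ := fun σ => Real.exp (-2*C*(σ - t0)) * (Y σ ^ 2 / (1 + Y σ ^ 2)) with hg_def
  have hne : ∀ σ ∈ Set.Icc t0 T, (1 + Y σ ^ 2) ≠ 0 := fun σ hσ => by nlinarith [hpos σ hσ]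
  have hderiv : ∀ σ ∈ Set.Icc t0 T, HasDerivAt g
      (Real.exp (-2*C*(σ - t0)) * (-2*C*1) * (Y σ ^ 2 / (1 + Y σ ^ 2)) +
        Real.exp (-2*C*(σ - t0)) *
          (((2:ℕ) * Y σ ^ (2-1) * deriv Y σ) * (1 + Y σ ^ 2) - Y σ ^ 2 * ((2:ℕ) * Y σ ^ (2-1) * deriv Y σ)) / (1 + Y σ ^ 2) ^ 2) σ := by
    intro σ hσ
    have hY : HasDerivAt Y (deriv Y σ) σ := (hdiff σ hσ).hasDerivAt
    have hE : HasDerivAt (fun x => Real.exp (-2*C*(x - t0))) (Real.exp (-2*C*(σ - t0)) * (-2*C*1)) σ :=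
      (((hasDerivAt_id σ).sub_const t0).const_mul (-2*C)).exp
    have hu : HasDerivAt (fun x => Y x ^ 2) ((2:ℕ) * Y σ ^ (2-1) * deriv Y σ) σ := hY.pow 2
    have h1u : HasDerivAt (fun x => 1 + Y x ^ 2) ((2:ℕ) * Y σ ^ (2-1) * deriv Y σ) σ := hu.const_add 1
    have hv := hu.div h1u (hne σ hσ)
    have := hE.mul hv
    refine this.congr_deriv ?_
    simp only [Pi.div_apply]
    ring
  -- g is antitone on Icc t0 T
  have hanti : AntitoneOn g (Set.Icc t0 T) := by
    apply antitoneOn_of_deriv_nonpos (convex_Icc t0 T)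
    · -- continuity
      have hYc : ContinuousOn Y (Set.Icc t0 T) := fun σ hσ => (hdiff σ hσ).continuousAt.continuousWithinAt
      apply ContinuousOn.mul
      · exact (Real.continuous_exp.comp (by continuity)).continuousOn
      · exact (hYc.pow 2).div (continuousOn_const.add (hYc.pow 2)) hne
    · intro x hx
      rw [interior_Icc] at hx
      exact ((hderiv x (Set.mem_Icc_of_Ioo hx)).differentiableAt).differentiableWithinAt
    · intro x hx
      rw [interior_Icc] at hx
      have hx' := Set.mem_Icc_of_Ioo hx
      rw [(hderiv x hx').deriv]
      have hy := hpos x hx'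
      have hi := hineq x hx'
      have hEp : 0 < Real.exp (-2*C*(x - t0)) := Real.exp_pos _
      have h1p : (0:ℝ) < 1 + Y x ^ 2 := by nlinarith
      have key : Y x * deriv Y x ≤ C * (Y x ^ 2 + Y x ^ 4) := by nlinarith
      have heq : Real.exp (-2*C*(x - t0)) * (-2*C*1) * (Y x ^ 2 / (1 + Y x ^ 2)) +
          Real.exp (-2*C*(x - t0)) *
            (((2:ℕ) * Y x ^ (2-1) * deriv Y x) * (1 + Y x ^ 2) - Y x ^ 2 * ((2:ℕ) * Y x ^ (2-1) * deriv Y x)) / (1 + Y x ^ 2) ^ 2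
          = Real.exp (-2*C*(x - t0)) * ((2 * Y x * deriv Y x - 2*C*(Y x ^ 2)*(1 + Y x ^ 2)) / (1 + Y x ^ 2) ^ 2) := by
        push_cast
        field_simp
        ring
      rw [heq]
      apply mul_nonpos_of_nonneg_of_nonpos hEp.le
      apply div_nonpos_of_nonpos_of_nonneg _ (by positivity)
      nlinarith
  -- Gronwall conclusion
  have key : ∀ σ ∈ Set.Icc t0 T,
      Real.exp (-2*C*(σ - t0)) * (Y σ ^ 2 / (1 + Y σ ^ 2)) ≤ Y t0 ^ 2 / (1 + Y t0 ^ 2) := by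
    intro σ hσ
    have := hanti ht0 hσ hσ.1
    simpa [hg_def] using this
  have part1 : ∀ σ ∈ Set.Icc t0 T,
      1 < Real.exp (-2 * C * (σ - t0)) * (1 / Y t0 ^ 2 + 1) →
      Y σ ^ 2 ≤ (Real.exp (-2 * C * (σ - t0)) * (1 / Y t0 ^ 2 + 1) - 1)⁻¹ := by
    intro σ hσ hA
    have hEp : 0 < Real.exp (-2*C*(σ - t0)) := Real.exp_pos _
    have hyσ := hpos σ hσ
    have hkey := key σ hσ
    have h1u : (0:ℝ) < 1 + Y σ ^ 2 := by nlinarith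
    have h1u0 : (0:ℝ) < 1 + Y t0 ^ 2 := by nlinarith
    rw [← mul_div_assoc, div_le_div_iff₀ h1u h1u0] at hkey
    have hx : 0 < Real.exp (-2 * C * (σ - t0)) * (1 / Y t0 ^ 2 + 1) - 1 := by linarith
    rw [← one_div, le_div_iff₀ hx]
    have hY02 : 0 < Y t0 ^ 2 := by positivity
    have hgoal : Y σ ^ 2 * (Real.exp (-2*C*(σ - t0)) * (1 / Y t0 ^ 2 + 1) - 1) * Y t0 ^ 2
        = Real.exp (-2*C*(σ - t0)) * Y σ ^ 2 * (1 + Y t0 ^ 2) - Y σ ^ 2 * Y t0 ^ 2 := by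
      field_simp
    nlinarith [hkey, hgoal, hY02]
  refine ⟨part1, ?_⟩
  intro σ hσ hτ
  have hY02 : 0 < Y t0 ^ 2 := by positivity
  have hxx : (0:ℝ) < 1 + 1/(1+2*Y t0^2) := by positivity
  have hτ' : Real.exp (2*C*(σ - t0)) ≤ 1 + 1/(1+2*Y t0^2) := by
    rw [← Real.exp_log hxx]
    apply Real.exp_le_exp.2
    calc 2*C*(σ - t0) ≤ 2*C*((2*C)⁻¹ * Real.log (1 + 1/(1+2*Y t0^2))) := by
          apply mul_le_mul_of_nonneg_left hτ (by positivity)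
      _ = Real.log (1 + 1/(1+2*Y t0^2)) := by field_simp
  have hlb : (1+2*Y t0^2)/(2+2*Y t0^2) ≤ Real.exp (-2*C*(σ - t0)) := by
    rw [show (-2*C*(σ - t0)) = -(2*C*(σ - t0)) by ring, Real.exp_neg]
    calc (1+2*Y t0^2)/(2+2*Y t0^2) = (1 + 1/(1+2*Y t0^2))⁻¹ := by
          rw [show (1 + 1/(1+2*Y t0^2)) = (2+2*Y t0^2)/(1+2*Y t0^2) from by field_simp; ring, inv_div]
      _ ≤ (Real.exp (2*C*(σ - t0)))⁻¹ := inv_anti₀ (Real.exp_pos _) hτ'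
  have hmul := mul_le_mul_of_nonneg_right hlb (show (0:ℝ) ≤ 1 / Y t0 ^ 2 + 1 by positivity)
  have heq : (1+2*Y t0^2)/(2+2*Y t0^2) * (1 / Y t0 ^ 2 + 1) = 1 + 1/(2*Y t0^2) := by
    field_simp
    ring
  rw [heq] at hmul
  have hA : 1 < Real.exp (-2 * C * (σ - t0)) * (1 / Y t0 ^ 2 + 1) := by
    have : (0:ℝ) < 1/(2*Y t0^2) := by positivity
    calc (1:ℝ) < 1 + 1/(2*Y t0^2) := by linarith
      _ ≤ _ := by convert hmul using 2 <;> ring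
  have hu := part1 σ hσ hA
  have hge : 1/(2*Y t0^2) ≤ Real.exp (-2 * C * (σ - t0)) * (1 / Y t0 ^ 2 + 1) - 1 := by
    have h' : 1 + 1/(2*Y t0^2) ≤ Real.exp (-2 * C * (σ - t0)) * (1 / Y t0 ^ 2 + 1) := by
      convert hmul using 2 <;> ring
    linarith
  have hxpos : (0:ℝ) < 1/(2*Y t0^2) := by positivity
  have hinv : (Real.exp (-2 * C * (σ - t0)) * (1 / Y t0 ^ 2 + 1) - 1)⁻¹ ≤ (1/(2*Y t0^2))⁻¹ :=
    inv_anti₀ hxpos hge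
  have h2u : Y σ ^ 2 ≤ 2 * Y t0 ^ 2 := by
    have he : (1/(2*Y t0^2))⁻¹ = 2 * Y t0 ^ 2 := by rw [one_div, inv_inv]
    calc Y σ ^ 2 ≤ _ := hu
      _ ≤ _ := hinv
      _ = 2 * Y t0 ^ 2 := he
  calc Y σ = Real.sqrt (Y σ ^ 2) := (Real.sqrt_sq (hpos σ hσ).le).symm
    _ ≤ Real.sqrt (2 * Y t0 ^ 2) := Real.sqrt_le_sqrt h2u
    _ = Real.sqrt 2 * Y t0 := by
        rw [Real.sqrt_mul (by norm_num : (0:ℝ) ≤ 2), Real.sqrt_sq hY0.le]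
end
end
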